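/- With X₁ = σ_Z⊗I₂, X₂ = σ_X⊗I₂, X₃ = σ_Y⊗σ_Z, X₄ = σ_Y⊗σ_Y, the 16×16 Hermitian matrix M = X₁⊗X₁ + X₂⊗X₂ − X₃⊗X₃ + X₄⊗X₄ has largest eigenvalue 4, and the eigenspace of M for eigenvalue 4 is one-dimensional, spanned by the maximally entangled vector |φ₄⟩ = (1/2)(|00⟩+|11⟩+|22⟩+|33⟩) ∈ ℂ⁴⊗ℂ⁴. -/

import Mathlib

open Matrix Kronecker

noncomputable def sX : Matrix (Fin 2) (Fin 2) ℂ := !![0, 1; 1, 0]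
noncomputable def sY : Matrix (Fin 2) (Fin 2) ℂ := !![0, -Complex.I; Complex.I, 0]
noncomputable def sZ : Matrix (Fin 2) (Fin 2) ℂ := !![1, 0; 0, -1]

noncomputable def Xmat : Fin 4 → Matrix (Fin 2 × Fin 2) (Fin 2 × Fin 2) ℂ
  | 0 => sZ ⊗ₖ (1 : Matrix (Fin 2) (Fin 2) ℂ)
  | 1 => sX ⊗ₖ (1 : Matrix (Fin 2) (Fin 2) ℂ)
  | 2 => sY ⊗ₖ sZ
  | 3 => sY ⊗ₖ sY

/-- M = X₁⊗X₁ + X₂⊗X₂ − X₃⊗X₃ + X₄⊗X₄. -/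
noncomputable def Mmat :
    Matrix ((Fin 2 × Fin 2) × (Fin 2 × Fin 2)) ((Fin 2 × Fin 2) × (Fin 2 × Fin 2)) ℂ :=
  Xmat 0 ⊗ₖ Xmat 0 + Xmat 1 ⊗ₖ Xmat 1 - Xmat 2 ⊗ₖ Xmat 2 + Xmat 3 ⊗ₖ Xmat 3

/-- The maximally entangled state |φ₄⟩, with entry 1/2 at positions |kk⟩. -/
noncomputable def phi4 : (Fin 2 × Fin 2) × (Fin 2 × Fin 2) → ℂ :=
  fun p => if p.1 = p.2 then (1 / 2 : ℂ) else 0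

/- ### auxiliary integer-matrix development -/

abbrev ι4 : Type := Fin 2 × Fin 2
abbrev ι16 : Type := ι4 × ι4

def sXz : Matrix (Fin 2) (Fin 2) ℤ := !![0, 1; 1, 0]
def sYz : Matrix (Fin 2) (Fin 2) ℤ := !![0, -1; 1, 0]
def sZz : Matrix (Fin 2) (Fin 2) ℤ := !![1, 0; 0, -1]

def Az : Matrix ι4 ι4 ℤ := sZz ⊗ₖ (1 : Matrix (Fin 2) (Fin 2) ℤ)
def Bz : Matrix ι4 ι4 ℤ := sXz ⊗ₖ (1 : Matrix (Fin 2) (Fin 2) ℤ)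
def Cz : Matrix ι4 ι4 ℤ := sYz ⊗ₖ sZz
def Dz : Matrix ι4 ι4 ℤ := sYz ⊗ₖ sYz

def Nz : Matrix ι16 ι16 ℤ := Az ⊗ₖ Az + Bz ⊗ₖ Bz + Cz ⊗ₖ Cz + Dz ⊗ₖ Dz

def enc (p : ι16) : Fin 16 :=
  ⟨8 * p.1.1.val + 4 * p.1.2.val + 2 * p.2.1.val + p.2.2.val, by omega⟩

def ofLit (L : Matrix (Fin 16) (Fin 16) ℤ) : Matrix ι16 ι16 ℤ :=
  Matrix.of fun p q => L (enc p) (enc q)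

def n2l : Matrix (Fin 16) (Fin 16) ℤ :=
  !![6, 0, 0, 0, 0, 4, 0, 0, 0, 0, 4, 0, 0, 0, 0, 2;
  0, 2, 0, 0, 0, 0, 0, 0, 0, 0, 0, 0, 0, 0, -2, 0;
  0, 0, 2, 0, 0, 0, 0, 0, 0, 0, 0, 0, 0, 2, 0, 0;
  0, 0, 0, 6, 0, 0, 4, 0, 0, -4, 0, 0, -2, 0, 0, 0;
  0, 0, 0, 0, 2, 0, 0, 0, 0, 0, 0, -2, 0, 0, 0, 0;
  4, 0, 0, 0, 0, 6, 0, 0, 0, 0, 2, 0, 0, 0, 0, 4;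
  0, 0, 0, 4, 0, 0, 6, 0, 0, -2, 0, 0, -4, 0, 0, 0;
  0, 0, 0, 0, 0, 0, 0, 2, 2, 0, 0, 0, 0, 0, 0, 0;
  0, 0, 0, 0, 0, 0, 0, 2, 2, 0, 0, 0, 0, 0, 0, 0;
  0, 0, 0, -4, 0, 0, -2, 0, 0, 6, 0, 0, 4, 0, 0, 0;
  4, 0, 0, 0, 0, 2, 0, 0, 0, 0, 6, 0, 0, 0, 0, 4;
  0, 0, 0, 0, -2, 0, 0, 0, 0, 0, 0, 2, 0, 0, 0, 0;
  0, 0, 0, -2, 0, 0, -4, 0, 0, 4, 0, 0, 6, 0, 0, 0;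
  0, 0, 2, 0, 0, 0, 0, 0, 0, 0, 0, 0, 0, 2, 0, 0;
  0, -2, 0, 0, 0, 0, 0, 0, 0, 0, 0, 0, 0, 0, 2, 0;
  2, 0, 0, 0, 0, 4, 0, 0, 0, 0, 4, 0, 0, 0, 0, 6]
def n3l : Matrix (Fin 16) (Fin 16) ℤ :=
  !![16, 0, 0, 0, 0, 12, 0, 0, 0, 0, 20, 0, 0, 0, 0, 16;
  0, 4, 0, 0, 0, 0, 0, 0, 0, 0, 0, 0, 0, 0, -4, 0;
  0, 0, -4, 0, 0, 0, 0, 0, 0, 0, 0, 0, 0, -4, 0, 0;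
  0, 0, 0, -16, 0, 0, -12, 0, 0, 20, 0, 0, 16, 0, 0, 0;
  0, 0, 0, 0, 4, 0, 0, 0, 0, 0, 0, -4, 0, 0, 0, 0;
  12, 0, 0, 0, 0, 16, 0, 0, 0, 0, 16, 0, 0, 0, 0, 20;
  0, 0, 0, -12, 0, 0, -16, 0, 0, 16, 0, 0, 20, 0, 0, 0;
  0, 0, 0, 0, 0, 0, 0, -4, -4, 0, 0, 0, 0, 0, 0, 0;
  0, 0, 0, 0, 0, 0, 0, -4, -4, 0, 0, 0, 0, 0, 0, 0;
  0, 0, 0, 20, 0, 0, 16, 0, 0, -16, 0, 0, -12, 0, 0, 0;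
  20, 0, 0, 0, 0, 16, 0, 0, 0, 0, 16, 0, 0, 0, 0, 12;
  0, 0, 0, 0, -4, 0, 0, 0, 0, 0, 0, 4, 0, 0, 0, 0;
  0, 0, 0, 16, 0, 0, 20, 0, 0, -12, 0, 0, -16, 0, 0, 0;
  0, 0, -4, 0, 0, 0, 0, 0, 0, 0, 0, 0, 0, -4, 0, 0;
  0, -4, 0, 0, 0, 0, 0, 0, 0, 0, 0, 0, 0, 0, 4, 0;
  16, 0, 0, 0, 0, 20, 0, 0, 0, 0, 12, 0, 0, 0, 0, 16]
def n4l : Matrix (Fin 16) (Fin 16) ℤ :=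
  !![72, 0, 0, 0, 0, 64, 0, 0, 0, 0, 64, 0, 0, 0, 0, 56;
  0, 8, 0, 0, 0, 0, 0, 0, 0, 0, 0, 0, 0, 0, -8, 0;
  0, 0, 8, 0, 0, 0, 0, 0, 0, 0, 0, 0, 0, 8, 0, 0;
  0, 0, 0, 72, 0, 0, 64, 0, 0, -64, 0, 0, -56, 0, 0, 0;
  0, 0, 0, 0, 8, 0, 0, 0, 0, 0, 0, -8, 0, 0, 0, 0;
  64, 0, 0, 0, 0, 72, 0, 0, 0, 0, 56, 0, 0, 0, 0, 64;
  0, 0, 0, 64, 0, 0, 72, 0, 0, -56, 0, 0, -64, 0, 0, 0;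
  0, 0, 0, 0, 0, 0, 0, 8, 8, 0, 0, 0, 0, 0, 0, 0;
  0, 0, 0, 0, 0, 0, 0, 8, 8, 0, 0, 0, 0, 0, 0, 0;
  0, 0, 0, -64, 0, 0, -56, 0, 0, 72, 0, 0, 64, 0, 0, 0;
  64, 0, 0, 0, 0, 56, 0, 0, 0, 0, 72, 0, 0, 0, 0, 64;
  0, 0, 0, 0, -8, 0, 0, 0, 0, 0, 0, 8, 0, 0, 0, 0;
  0, 0, 0, -56, 0, 0, -64, 0, 0, 64, 0, 0, 72, 0, 0, 0;
  0, 0, 8, 0, 0, 0, 0, 0, 0, 0, 0, 0, 0, 8, 0, 0;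
  0, -8, 0, 0, 0, 0, 0, 0, 0, 0, 0, 0, 0, 0, 8, 0;
  56, 0, 0, 0, 0, 64, 0, 0, 0, 0, 64, 0, 0, 0, 0, 72]
def n5l : Matrix (Fin 16) (Fin 16) ℤ :=
  !![256, 0, 0, 0, 0, 240, 0, 0, 0, 0, 272, 0, 0, 0, 0, 256;
  0, 16, 0, 0, 0, 0, 0, 0, 0, 0, 0, 0, 0, 0, -16, 0;
  0, 0, -16, 0, 0, 0, 0, 0, 0, 0, 0, 0, 0, -16, 0, 0;
  0, 0, 0, -256, 0, 0, -240, 0, 0, 272, 0, 0, 256, 0, 0, 0;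
  0, 0, 0, 0, 16, 0, 0, 0, 0, 0, 0, -16, 0, 0, 0, 0;
  240, 0, 0, 0, 0, 256, 0, 0, 0, 0, 256, 0, 0, 0, 0, 272;
  0, 0, 0, -240, 0, 0, -256, 0, 0, 256, 0, 0, 272, 0, 0, 0;
  0, 0, 0, 0, 0, 0, 0, -16, -16, 0, 0, 0, 0, 0, 0, 0;
  0, 0, 0, 0, 0, 0, 0, -16, -16, 0, 0, 0, 0, 0, 0, 0;
  0, 0, 0, 272, 0, 0, 256, 0, 0, -256, 0, 0, -240, 0, 0, 0;
  272, 0, 0, 0, 0, 256, 0, 0, 0, 0, 256, 0, 0, 0, 0, 240;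
  0, 0, 0, 0, -16, 0, 0, 0, 0, 0, 0, 16, 0, 0, 0, 0;
  0, 0, 0, 256, 0, 0, 272, 0, 0, -240, 0, 0, -256, 0, 0, 0;
  0, 0, -16, 0, 0, 0, 0, 0, 0, 0, 0, 0, 0, -16, 0, 0;
  0, -16, 0, 0, 0, 0, 0, 0, 0, 0, 0, 0, 0, 0, 16, 0;
  256, 0, 0, 0, 0, 272, 0, 0, 0, 0, 240, 0, 0, 0, 0, 256]
def bl : Matrix (Fin 16) (Fin 16) ℤ :=
  !![-32, 0, 0, 0, 0, 4, 0, 0, 0, 0, -12, 0, 0, 0, 0, 0;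
  0, -36, 0, 0, 0, 0, 0, 0, 0, 0, 0, 0, 0, 0, 12, 0;
  0, 0, -20, 0, 0, 0, 0, 0, 0, 0, 0, 0, 0, 4, 0, 0;
  0, 0, 0, -25, 0, 0, -5, 0, 0, -11, 0, 0, -7, 0, 0, 0;
  0, 0, 0, 0, -36, 0, 0, 0, 0, 0, 0, 12, 0, 0, 0, 0;
  16, 0, 0, 0, 0, -20, 0, 0, 0, 0, 12, 0, 0, 0, 0, 0;
  0, 0, 0, -5, 0, 0, -25, 0, 0, -7, 0, 0, -11, 0, 0, 0;
  0, 0, 0, 0, 0, 0, 0, -20, 4, 0, 0, 0, 0, 0, 0, 0;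
  0, 0, 0, 0, 0, 0, 0, 4, -20, 0, 0, 0, 0, 0, 0, 0;
  0, 0, 0, -11, 0, 0, -7, 0, 0, -25, 0, 0, -5, 0, 0, 0;
  -16, 0, 0, 0, 0, -4, 0, 0, 0, 0, -36, 0, 0, 0, 0, 0;
  0, 0, 0, 0, 12, 0, 0, 0, 0, 0, 0, -36, 0, 0, 0, 0;
  0, 0, 0, -7, 0, 0, -11, 0, 0, -5, 0, 0, -25, 0, 0, 0;
  0, 0, 4, 0, 0, 0, 0, 0, 0, 0, 0, 0, 0, -20, 0, 0;
  0, 12, 0, 0, 0, 0, 0, 0, 0, 0, 0, 0, 0, 0, -36, 0;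
  32, 0, 0, 0, 0, 20, 0, 0, 0, 0, 36, 0, 0, 0, 0, 0]

def Jz : Matrix ι16 ι16 ℤ :=
  Matrix.of fun p q => if p.1 = p.2 ∧ q.1 = q.2 then 24 else 0

def chiz : ι16 → ℤ := fun p => if p.1 = p.2 then 1 else 0

set_option maxHeartbeats 4000000 in
lemma hmul2 : ∀ p q, (Nz * Nz) p q = ofLit n2l p q := by
  letI : ∀ p q, Decidable ((Nz * Nz) p q = ofLit n2l p q) := fun p q => Int.decEq _ _
  decide
set_option maxHeartbeats 4000000 in
lemma hmul3 : ∀ p q, (ofLit n2l * Nz) p q = ofLit n3l p q := by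
  letI : ∀ p q, Decidable ((ofLit n2l * Nz) p q = ofLit n3l p q) := fun p q => Int.decEq _ _
  decide
set_option maxHeartbeats 4000000 in
lemma hmul4 : ∀ p q, (ofLit n3l * Nz) p q = ofLit n4l p q := by
  letI : ∀ p q, Decidable ((ofLit n3l * Nz) p q = ofLit n4l p q) := fun p q => Int.decEq _ _
  decide
set_option maxHeartbeats 4000000 in
lemma hmul5 : ∀ p q, (ofLit n4l * Nz) p q = ofLit n5l p q := by
  letI : ∀ p q, Decidable ((ofLit n4l * Nz) p q = ofLit n5l p q) := fun p q => Int.decEq _ _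
  decide
set_option maxHeartbeats 4000000 in
lemma hminpoly : ∀ p q, (ofLit n5l + (64 : ℤ) • Nz) p q = ((20 : ℤ) • ofLit n3l) p q := by
  letI : ∀ p q, Decidable ((ofLit n5l + (64 : ℤ) • Nz) p q = ((20 : ℤ) • ofLit n3l) p q) := fun p q => Int.decEq _ _
  decide
set_option maxHeartbeats 4000000 in
lemma hBrel : ∀ p q, (ofLit bl * (Nz - (4 : ℤ) • 1)) p q = ((96 : ℤ) • 1 - Jz) p q := by
  letI : ∀ p q, Decidable ((ofLit bl * (Nz - (4 : ℤ) • 1)) p q = ((96 : ℤ) • 1 - Jz) p q) := fun p q => Int.decEq _ _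
  decide
set_option maxHeartbeats 4000000 in
lemma hchi : ∀ p, Nz.mulVec chiz p = ((4 : ℤ) • chiz) p := by decide

noncomputable def fC : Matrix ι16 ι16 ℤ →+* Matrix ι16 ι16 ℂ :=
  (Int.castRingHom ℂ).mapMatrix

lemma kmap {m n : Type*} (A : Matrix m m ℤ) (B : Matrix n n ℤ) :
    (A.map (fun x : ℤ => (x : ℂ))) ⊗ₖ (B.map (fun x : ℤ => (x : ℂ)))
      = (A ⊗ₖ B).map (fun x : ℤ => (x : ℂ)) := by
  ext ⟨i, j⟩ ⟨k, l⟩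
  simp [Matrix.kroneckerMap_apply, Matrix.map_apply]

lemma hMN : Mmat = fC Nz := by
  have hc : ∀ M : Matrix ι16 ι16 ℤ, fC M = M.map (fun x : ℤ => (x : ℂ)) := fun _ => rfl
  have hZ : sZ = sZz.map (fun x : ℤ => (x : ℂ)) := by
    ext i j; fin_cases i <;> fin_cases j <;> simp [sZ, sZz]
  have hX : sX = sXz.map (fun x : ℤ => (x : ℂ)) := by
    ext i j; fin_cases i <;> fin_cases j <;> simp [sX, sXz]
  have hY : sY = Complex.I • sYz.map (fun x : ℤ => (x : ℂ)) := by
    ext i j; fin_cases i <;> fin_cases j <;>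
      simp [sY, sYz, Matrix.smul_apply]
  have h1 : (1 : Matrix (Fin 2) (Fin 2) ℂ)
      = (1 : Matrix (Fin 2) (Fin 2) ℤ).map (fun x : ℤ => (x : ℂ)) := by
    rw [Matrix.map_one _ (by simp) (by simp)]
  have hX0 : Xmat 0 = Az.map (fun x : ℤ => (x : ℂ)) := by
    show sZ ⊗ₖ (1 : Matrix (Fin 2) (Fin 2) ℂ) = _
    rw [hZ, h1, kmap]; rfl
  have hX1 : Xmat 1 = Bz.map (fun x : ℤ => (x : ℂ)) := by
    show sX ⊗ₖ (1 : Matrix (Fin 2) (Fin 2) ℂ) = _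
    rw [hX, h1, kmap]; rfl
  have hX2 : Xmat 2 = Complex.I • Cz.map (fun x : ℤ => (x : ℂ)) := by
    show sY ⊗ₖ sZ = _
    rw [hY, hZ, Matrix.smul_kronecker, kmap]; rfl
  have hX3 : Xmat 3 = -(Dz.map (fun x : ℤ => (x : ℂ))) := by
    show sY ⊗ₖ sY = _
    rw [hY, Matrix.smul_kronecker, Matrix.kronecker_smul, kmap, smul_smul,
      Complex.I_mul_I]
    show (-1 : ℂ) • _ = _
    rw [neg_one_smul]; rfl
  have hCC : Xmat 2 ⊗ₖ Xmat 2 = -(fC (Cz ⊗ₖ Cz)) := by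
    rw [hX2, Matrix.smul_kronecker, Matrix.kronecker_smul, smul_smul, Complex.I_mul_I,
      kmap, neg_one_smul, hc]
  have hDD : Xmat 3 ⊗ₖ Xmat 3 = fC (Dz ⊗ₖ Dz) := by
    rw [hX3, show (-(Dz.map (fun x : ℤ => (x : ℂ)))) = (-1 : ℂ) • (Dz.map (fun x : ℤ => (x : ℂ)))
        from (neg_one_smul _ _).symm,
      Matrix.smul_kronecker, Matrix.kronecker_smul, smul_smul, kmap, hc]
    norm_num
  have hAA : Xmat 0 ⊗ₖ Xmat 0 = fC (Az ⊗ₖ Az) := by rw [hX0, kmap, hc]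
  have hBB : Xmat 1 ⊗ₖ Xmat 1 = fC (Bz ⊗ₖ Bz) := by rw [hX1, kmap, hc]
  unfold Mmat Nz
  rw [hAA, hBB, hCC, hDD, _root_.map_add, _root_.map_add, _root_.map_add]
  abel

lemma castVec (A : Matrix ι16 ι16 ℤ) (w : ι16 → ℤ) :
    (A.map (fun x : ℤ => (x : ℂ))).mulVec (fun p => ((w p : ℤ) : ℂ))
      = fun p => ((A.mulVec w p : ℤ) : ℂ) := by
  funext p
  simp [Matrix.mulVec, dotProduct, Matrix.map_apply]

lemma phi4_eq : phi4 = (1 / 2 : ℂ) • fun p => ((chiz p : ℤ) : ℂ) := by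
  funext p
  by_cases hp : p.1 = p.2 <;> simp [phi4, chiz, hp]

lemma part1 : Mmat.mulVec phi4 = (4 : ℂ) • phi4 := by
  rw [hMN, phi4_eq, Matrix.mulVec_smul]
  show (1 / 2 : ℂ) • (Nz.map (fun x : ℤ => (x : ℂ))).mulVec _ = _
  rw [castVec]
  funext p
  have := hchi p
  simp only [Pi.smul_apply, smul_eq_mul] at this ⊢
  rw [this]
  push_cast
  ring

lemma minpolyC : fC Nz * fC Nz * fC Nz * fC Nz * fC Nz + (64 : ℤ) • fC Nz
    = (20 : ℤ) • (fC Nz * fC Nz * fC Nz) := by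
  have h2 : Nz * Nz = ofLit n2l := Matrix.ext hmul2
  have h3 : ofLit n2l * Nz = ofLit n3l := Matrix.ext hmul3
  have h4 : ofLit n3l * Nz = ofLit n4l := Matrix.ext hmul4
  have h5 : ofLit n4l * Nz = ofLit n5l := Matrix.ext hmul5
  have h6 : ofLit n5l + (64 : ℤ) • Nz = (20 : ℤ) • ofLit n3l := Matrix.ext hminpoly
  have key : Nz * Nz * Nz * Nz * Nz + (64 : ℤ) • Nz = (20 : ℤ) • (Nz * Nz * Nz) := by
    rw [h2, h3, h4, h5]; exact h6
  calc fC Nz * fC Nz * fC Nz * fC Nz * fC Nz + (64 : ℤ) • fC Nz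
      = fC (Nz * Nz * Nz * Nz * Nz + (64 : ℤ) • Nz) := by
        rw [_root_.map_add, _root_.map_mul, _root_.map_mul, _root_.map_mul, _root_.map_mul, map_zsmul]
    _ = fC ((20 : ℤ) • (Nz * Nz * Nz)) := by rw [key]
    _ = (20 : ℤ) • (fC Nz * fC Nz * fC Nz) := by
        rw [map_zsmul, _root_.map_mul, _root_.map_mul]

lemma BrelC : fC (ofLit bl) * (fC Nz - (4 : ℤ) • 1) = (96 : ℤ) • 1 - fC Jz := by
  have h : ofLit bl * (Nz - (4 : ℤ) • 1) = (96 : ℤ) • 1 - Jz := Matrix.ext hBrel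
  calc fC (ofLit bl) * (fC Nz - (4 : ℤ) • 1)
      = fC (ofLit bl * (Nz - (4 : ℤ) • 1)) := by
        rw [_root_.map_mul, _root_.map_sub, map_zsmul, _root_.map_one]
    _ = fC ((96 : ℤ) • 1 - Jz) := by rw [h]
    _ = (96 : ℤ) • 1 - fC Jz := by rw [_root_.map_sub, map_zsmul, _root_.map_one]

theorem stmt4 :
    (Mmat.mulVec phi4 = (4 : ℂ) • phi4) ∧
    (∀ v : (Fin 2 × Fin 2) × (Fin 2 × Fin 2) → ℂ,
      Mmat.mulVec v = (4 : ℂ) • v ↔ ∃ c : ℂ, v = c • phi4) ∧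
    (∀ μ : ℂ, (∃ v, v ≠ 0 ∧ Mmat.mulVec v = μ • v) → μ.re ≤ 4) := by
  refine ⟨part1, ?_, ?_⟩
  · intro v
    constructor
    · intro hv
      rw [hMN] at hv
      -- (fC Nz - 4•1).mulVec v = 0
      have e1 : (fC Nz - (4 : ℤ) • 1).mulVec v = 0 := by
        rw [Matrix.sub_mulVec, hv, Matrix.smul_mulVec, Matrix.one_mulVec]
        funext p
        simp [Pi.smul_apply, smul_eq_mul]
      have e2 : ((96 : ℤ) • (1 : Matrix ι16 ι16 ℂ) - fC Jz).mulVec v = 0 := by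
        rw [← BrelC, ← Matrix.mulVec_mulVec, e1, Matrix.mulVec_zero]
      set S : ℂ := v ((0,0),(0,0)) + v ((0,1),(0,1)) + v ((1,0),(1,0)) + v ((1,1),(1,1)) with hS
      have hJv : ∀ p : ι16, (fC Jz).mulVec v p = if p.1 = p.2 then 24 * S else 0 := by
        intro p
        show ∑ q, (Jz.map (fun x : ℤ => (x : ℂ))) p q * v q = _
        by_cases hp : p.1 = p.2 <;>
          · simp only [Jz, Matrix.map_apply, Matrix.of_apply, hp, true_and, false_and,
              if_false, apply_ite (fun x : ℤ => (x : ℂ)), Int.cast_ofNat, Int.cast_zero,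
              ite_mul, zero_mul, Fintype.sum_prod_type, Fin.sum_univ_two]
            simp (config := { decide := true }) [hS, Prod.ext_iff]
            try ring
      have e3 : ∀ p, (96 : ℂ) * v p = if p.1 = p.2 then 24 * S else 0 := by
        intro p
        have h0 := congrFun e2 p
        rw [Matrix.sub_mulVec, Matrix.smul_mulVec, Matrix.one_mulVec] at h0
        have h1 : ((96 : ℤ) • v - (fC Jz).mulVec v) p = 0 := h0
        have h2 : (96 : ℂ) * v p - (fC Jz).mulVec v p = 0 := by
          simpa [Pi.smul_apply, smul_eq_mul] using h1
        rw [← hJv p]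
        linear_combination h2
      refine ⟨S / 2, ?_⟩
      funext p
      have h96 := e3 p
      by_cases hp : p.1 = p.2
      · rw [if_pos hp] at h96
        show v p = (S / 2) * phi4 p
        simp only [phi4, hp, if_true]
        linear_combination h96 / 96
      · rw [if_neg hp] at h96
        show v p = (S / 2) * phi4 p
        simp only [phi4, hp, if_false, mul_zero]
        linear_combination h96 / 96
    · rintro ⟨c, rfl⟩
      rw [Matrix.mulVec_smul, part1, smul_comm]
  · rintro μ ⟨v, hvne, hv⟩
    rw [hMN] at hv
    set Mc := fC Nz with hMc
    have pow1 : Mc.mulVec v = μ • v := hv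
    have pow2 : (Mc * Mc).mulVec v = (μ * μ) • v := by
      rw [← Matrix.mulVec_mulVec, pow1, Matrix.mulVec_smul, pow1, smul_smul]
    have pow3 : (Mc * Mc * Mc).mulVec v = (μ * μ * μ) • v := by
      rw [← Matrix.mulVec_mulVec, pow1, Matrix.mulVec_smul, pow2, smul_smul]
      ring_nf
    have pow5 : (Mc * Mc * Mc * Mc * Mc).mulVec v = (μ * μ * μ * μ * μ) • v := by
      rw [← Matrix.mulVec_mulVec, pow1, Matrix.mulVec_smul, ← Matrix.mulVec_mulVec, pow1,
        Matrix.mulVec_smul, pow3, smul_smul, smul_smul]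
      ring_nf
    obtain ⟨i, hi⟩ := Function.ne_iff.mp hvne
    have hbig := congrFun (congrArg (fun M => M.mulVec v) minpolyC) i
    rw [Matrix.add_mulVec, Matrix.smul_mulVec, Matrix.smul_mulVec,
      pow5, pow1, pow3] at hbig
    have heq : (μ * μ * μ * μ * μ) * v i + 64 * (μ * v i) = 20 * ((μ * μ * μ) * v i) := by
      have h1 := hbig
      simp only [Pi.add_apply, Pi.smul_apply, smul_eq_mul, zsmul_eq_mul] at h1
      exact_mod_cast h1
    have hfac : μ * (μ - 2) * (μ + 2) * (μ - 4) * (μ + 4) * v i = 0 := by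
      linear_combination heq
    have hroot : μ * (μ - 2) * (μ + 2) * (μ - 4) * (μ + 4) = 0 := by
      rcases mul_eq_zero.mp hfac with h | h
      · exact h
      · exact absurd h (by simpa using hi)
    rcases mul_eq_zero.mp hroot with h | h
    · rcases mul_eq_zero.mp h with h | h
      · rcases mul_eq_zero.mp h with h | h
        · rcases mul_eq_zero.mp h with h | h
          · rw [h]; norm_num
          · rw [sub_eq_zero.mp h]; norm_num
        · rw [eq_neg_of_add_eq_zero_left h]; norm_num
      · rw [sub_eq_zero.mp h]; norm_num
    · rw [eq_neg_of_add_eq_zero_left h]; norm_num
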